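/- Let Z = [−1,0] × [0,1] × [0,1] ⊆ ℝ^3 and X = { x ∈ Z : x_1(x_3 − 1) ≥ x_2^2 }. Then X is compact and convex, and its unique lexicographic maximum is (0, 0, 1). -/

import Mathlib

noncomputable def sortedComp {n : ℕ} (x : Fin n → ℝ) (k : Fin n) : ℝ :=
  x (Tuple.sort x k)

def IsLexMax {n : ℕ} (X : Set (Fin n → ℝ)) (y : Fin n → ℝ) : Prop :=
  y ∈ X ∧ ∀ x ∈ X, x = y ∨ ∃ i : Fin n,
    (∀ j : Fin n, j < i → sortedComp y j = sortedComp x j) ∧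
    sortedComp x i < sortedComp y i

lemma mono3 (x : Fin 3 → ℝ) (h01 : x 0 ≤ x 1) (h12 : x 1 ≤ x 2) : Monotone x := by
  intro i j hij
  fin_cases i <;> fin_cases j <;> simp_all <;> first | rfl | linarith | omega
  
lemma sortedComp_of_monotone {n : ℕ} (x : Fin n → ℝ) (h : Monotone x) :
    sortedComp x = x := by
  have := (Tuple.sort_eq_refl_iff_monotone).2 h
  funext k
  simp [sortedComp, this]

lemma sortedComp_zero_le {n : ℕ} (x : Fin (n+1) → ℝ) (j : Fin (n+1)) :
    sortedComp x 0 ≤ x j := by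
  have hm := Tuple.monotone_sort x
  have : (x ∘ Tuple.sort x) 0 ≤ (x ∘ Tuple.sort x) ((Tuple.sort x)⁻¹ j) :=
    hm (Fin.zero_le _)
  simpa [sortedComp] using this

lemma key_ineq (a b u v p q : ℝ) (hu : 0 ≤ u) (hv : 0 ≤ v) (hp : 0 ≤ p) (hq : 0 ≤ q)
    (h1 : a ^ 2 ≤ u * p) (h2 : b ^ 2 ≤ v * q) : 2 * (a * b) ≤ u * q + v * p := by
  nlinarith [sq_nonneg (u*q - v*p), sq_nonneg (u*q + v*p), mul_nonneg hu hq, mul_nonneg hv hp,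
    mul_le_mul h1 h2 (sq_nonneg b) (le_trans (sq_nonneg a) h1), sq_nonneg (a*b),
    sq_nonneg (u*q + v*p - 2*a*b)]

theorem compact_convex_example_lexmax :
    let X : Set (Fin 3 → ℝ) := {x | x 0 ∈ Set.Icc (-1 : ℝ) 0 ∧ x 1 ∈ Set.Icc (0 : ℝ) 1 ∧
      x 2 ∈ Set.Icc (0 : ℝ) 1 ∧ (x 1) ^ 2 ≤ x 0 * (x 2 - 1)}
    IsCompact X ∧ Convex ℝ X ∧ IsLexMax X ![0, 0, 1] ∧
      ∀ y, IsLexMax X y → y = ![0, 0, 1] := by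
  intro X
  have hymem : (![0, 0, 1] : Fin 3 → ℝ) ∈ X := by
    constructor
    · norm_num
    refine ⟨by norm_num, by show (0:ℝ) ≤ 1 ∧ (1:ℝ) ≤ 1; norm_num, by norm_num⟩
  have hymono : Monotone (![0, 0, 1] : Fin 3 → ℝ) := mono3 _ (by norm_num) (by show (0:ℝ) ≤ 1; norm_num)
  have hysort : sortedComp (![0, 0, 1] : Fin 3 → ℝ) = ![0, 0, 1] :=
    sortedComp_of_monotone _ hymono
  have hlex : IsLexMax X ![0, 0, 1] := by
    refine ⟨hymem, fun x hx => ?_⟩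
    obtain ⟨⟨hx0l, hx0u⟩, ⟨hx1l, hx1u⟩, ⟨hx2l, hx2u⟩, hq⟩ := hx
    by_cases h0 : x 0 = 0
    · have h1 : x 1 = 0 := by nlinarith
      have hmono : Monotone x := mono3 x (by rw [h0, h1]) (by rw [h1]; exact hx2l)
      have hs : sortedComp x = x := sortedComp_of_monotone x hmono
      by_cases h2 : x 2 = 1
      · left
        funext j
        fin_cases j <;> simp [h0, h1, h2]
      · right
        refine ⟨2, fun j hj => ?_, ?_⟩
        · rw [hysort, hs]
          fin_cases j <;> simp_all
        · rw [hysort, hs]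
          norm_num
          exact lt_of_le_of_ne hx2u h2
    · right
      refine ⟨0, fun j hj => absurd hj (Fin.not_lt_zero j), ?_⟩
      rw [hysort]
      have : sortedComp x 0 ≤ x 0 := sortedComp_zero_le x 0
      have : x 0 < 0 := lt_of_le_of_ne hx0u h0
      simp only [Matrix.cons_val_zero]
      linarith [sortedComp_zero_le x 0]
  refine ⟨?_, ?_, hlex, ?_⟩
  · -- compact
    have hcl : IsClosed X := by
      have h0 : IsClosed {x : Fin 3 → ℝ | x 0 ∈ Set.Icc (-1 : ℝ) 0} :=
        isClosed_Icc.preimage (continuous_apply 0)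
      have h1 : IsClosed {x : Fin 3 → ℝ | x 1 ∈ Set.Icc (0 : ℝ) 1} :=
        isClosed_Icc.preimage (continuous_apply 1)
      have h2 : IsClosed {x : Fin 3 → ℝ | x 2 ∈ Set.Icc (0 : ℝ) 1} :=
        isClosed_Icc.preimage (continuous_apply 2)
      have h3 : IsClosed {x : Fin 3 → ℝ | (x 1) ^ 2 ≤ x 0 * (x 2 - 1)} :=
        isClosed_le (by fun_prop) (by fun_prop)
      have : X = {x : Fin 3 → ℝ | x 0 ∈ Set.Icc (-1 : ℝ) 0} ∩
          {x | x 1 ∈ Set.Icc (0 : ℝ) 1} ∩ {x | x 2 ∈ Set.Icc (0 : ℝ) 1} ∩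
          {x | (x 1) ^ 2 ≤ x 0 * (x 2 - 1)} := by
        ext x
        simp only [Set.mem_setOf_eq, Set.mem_inter_iff, X]
        tauto
      rw [this]
      exact ((h0.inter h1).inter h2).inter h3
    have hsub : X ⊆ Set.Icc ![(-1 : ℝ), 0, 0] ![0, 1, 1] := by
      intro x hx
      obtain ⟨⟨hx0l, hx0u⟩, ⟨hx1l, hx1u⟩, ⟨hx2l, hx2u⟩, hq⟩ := hx
      constructor <;> intro i <;> fin_cases i <;> simpa
    exact (isCompact_Icc).of_isClosed_subset hcl hsub
  · -- convex
    intro x hx y hy a b ha hb hab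
    obtain ⟨⟨hx0l, hx0u⟩, ⟨hx1l, hx1u⟩, ⟨hx2l, hx2u⟩, hqx⟩ := hx
    obtain ⟨⟨hy0l, hy0u⟩, ⟨hy1l, hy1u⟩, ⟨hy2l, hy2u⟩, hqy⟩ := hy
    have hkey : 2 * (x 1 * y 1) ≤ (-x 0) * (1 - y 2) + (-y 0) * (1 - x 2) :=
      key_ineq (x 1) (y 1) (-x 0) (-y 0) (1 - x 2) (1 - y 2)
        (by linarith) (by linarith) (by linarith) (by linarith)
        (by nlinarith) (by nlinarith)
    refine ⟨⟨?_, ?_⟩, ⟨?_, ?_⟩, ⟨?_, ?_⟩, ?_⟩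
    · simp only [Pi.add_apply, Pi.smul_apply, smul_eq_mul]; nlinarith
    · simp only [Pi.add_apply, Pi.smul_apply, smul_eq_mul]; nlinarith
    · simp only [Pi.add_apply, Pi.smul_apply, smul_eq_mul]; nlinarith
    · simp only [Pi.add_apply, Pi.smul_apply, smul_eq_mul]; nlinarith
    · simp only [Pi.add_apply, Pi.smul_apply, smul_eq_mul]; nlinarith
    · simp only [Pi.add_apply, Pi.smul_apply, smul_eq_mul]; nlinarith
    · simp only [Pi.add_apply, Pi.smul_apply, smul_eq_mul]
      have habm : (a * x 0 + b * y 0) * (a + b) = a * x 0 + b * y 0 := by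
        rw [hab, mul_one]
      nlinarith [habm, mul_nonneg ha hb, sq_nonneg a, sq_nonneg b,
        mul_le_mul_of_nonneg_left hqx (sq_nonneg a),
        mul_le_mul_of_nonneg_left hqy (sq_nonneg b),
        mul_le_mul_of_nonneg_left hkey (mul_nonneg ha hb)]
  · -- uniqueness
    intro y hy
    rcases hy.2 ![0, 0, 1] hymem with h | ⟨i, hji, hlt⟩
    · exact h.symm
    rcases hlex.2 y hy.1 with h | ⟨i', hji', hlt'⟩
    · exact h
    rcases lt_trichotomy i i' with h | h | h
    · have := hji' i h; linarith
    · subst h; linarith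
    · have := hji i' h; linarith
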